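/- The N-particle system is the canonical Hamiltonian system of the discrete Hamiltonian H: fix a point (q,p) with q_i, p_i ∈ ℝⁿ and q_i ≠ q_j for all i ≠ j, and suppose G : ℝ → ℝ is an even function differentiable at every value ‖q_i − q_j‖ with i ≠ j. Then H is differentiable in (q,p) at this point, its gradient with respect to p_i equals Σ_{j=1}^N G(‖q_i − q_j‖) p_j, and its gradient with respect to q_i equals Σ_{j≠i} ⟨p_i, p_j⟩ G′(‖q_i − q_j‖) (q_i − q_j)/‖q_i − q_j‖; hence dq_i/dt = ∂H/∂p_i and dp_i/dt = −∂H/∂q_i reproduce the N-particle system of the EP equations. -/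

import Mathlib

open InnerProductSpace

section Helpers

variable {F : Type*} [NormedAddCommGroup F] [InnerProductSpace ℝ F] [CompleteSpace F]

private lemma hga_of_hf {f : F → ℝ} {L : F →L[ℝ] ℝ} {g x : F} (h : HasFDerivAt f L x)
    (hg : ∀ v, L v = inner ℝ g v) : HasGradientAt f g x := by
  rw [hasGradientAt_iff_hasFDerivAt]
  have : toDual ℝ F g = L := ContinuousLinearMap.ext fun v => by
    rw [toDual_apply_apply, hg]
  rw [this]; exact h

private lemma gradConst (k : ℝ) (x : F) : HasGradientAt (fun _ : F => k) 0 x :=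
  hga_of_hf (hasFDerivAt_const k x) (fun v => by simp)

private lemma gradA (a : F) (c : ℝ) (x : F) :
    HasGradientAt (fun y : F => (inner ℝ y a : ℝ) * c) (c • a) x := by
  refine hga_of_hf (((hasFDerivAt_id x).inner ℝ (hasFDerivAt_const a x)).mul_const c) fun v => ?_
  simp [fderivInnerCLM_apply, real_inner_smul_left, real_inner_smul_right, real_inner_comm]

private lemma gradB (a : F) (c : ℝ) (x : F) :
    HasGradientAt (fun y : F => (inner ℝ a y : ℝ) * c) (c • a) x := by
  refine hga_of_hf (((hasFDerivAt_const a x).inner ℝ (hasFDerivAt_id x)).mul_const c) fun v => ?_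
  simp [fderivInnerCLM_apply, real_inner_smul_left, real_inner_smul_right, real_inner_comm]

private lemma gradC (c : ℝ) (x : F) :
    HasGradientAt (fun y : F => (inner ℝ y y : ℝ) * c) (c • x + c • x) x := by
  refine hga_of_hf (((hasFDerivAt_id x).inner ℝ (hasFDerivAt_id x)).mul_const c) fun v => ?_
  simp [fderivInnerCLM_apply, inner_add_left, real_inner_smul_left, real_inner_smul_right,
    real_inner_comm]
  ring

private lemma gradSum {ι : Type*} (s : Finset ι) {f : ι → F → ℝ} {g : ι → F} {x : F}
    (h : ∀ i ∈ s, HasGradientAt (f i) (g i) x) :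
    HasGradientAt (fun y => ∑ i ∈ s, f i y) (∑ i ∈ s, g i) x := by
  refine hga_of_hf (HasFDerivAt.fun_sum fun i hi => (h i hi : HasFDerivAt _ _ _)) fun v => ?_
  simp [sum_inner, toDual_apply_apply]

private lemma gradHalf {f : F → ℝ} {g x : F} (h : HasGradientAt f g x) :
    HasGradientAt (fun y => (1/2 : ℝ) * f y) ((1/2 : ℝ) • g) x := by
  refine hga_of_hf (HasFDerivAt.const_mul (h : HasFDerivAt _ _ _) (1/2 : ℝ)) fun v => ?_
  simp [real_inner_smul_left, toDual_apply_apply]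

private lemma gradNormComp {G : ℝ → ℝ} {c y : F} (hy : y ≠ c) (hG : DifferentiableAt ℝ G ‖y - c‖)
    (k : ℝ) :
    HasGradientAt (fun x : F => k * G ‖x - c‖)
      ((k * deriv G ‖y - c‖ / ‖y - c‖) • (y - c)) y := by
  have hz : y - c ≠ 0 := sub_ne_zero.mpr hy
  have hr : ‖y - c‖ ≠ 0 := norm_ne_zero_iff.mpr hz
  have h1 : HasFDerivAt (fun x : F => (inner ℝ (x - c) (x - c) : ℝ))
      ((fderivInnerCLM ℝ (y - c, y - c)).comp ((ContinuousLinearMap.id ℝ F).prod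
        (ContinuousLinearMap.id ℝ F))) y := by
    simpa using ((hasFDerivAt_id y).sub_const c).inner ℝ ((hasFDerivAt_id y).sub_const c)
  have hinner : (inner ℝ (y - c) (y - c) : ℝ) ≠ 0 := by
    rw [real_inner_self_eq_norm_mul_norm]; positivity
  have h2 := (Real.hasDerivAt_sqrt hinner).comp_hasFDerivAt y h1
  have heq : ((fun x => Real.sqrt x) ∘ fun x : F => (inner ℝ (x - c) (x - c) : ℝ))
      = fun x : F => ‖x - c‖ := by
    funext x
    simp only [Function.comp_apply]
    rw [real_inner_self_eq_norm_mul_norm, Real.sqrt_mul_self (norm_nonneg _)]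
  rw [heq] at h2
  have h3 := HasFDerivAt.const_mul ((hG.hasDerivAt).comp_hasFDerivAt y h2) k
  simp only [Function.comp_def] at h3
  refine hga_of_hf h3 fun v => ?_
  have hs : Real.sqrt (inner ℝ (y - c) (y - c) : ℝ) = ‖y - c‖ := by
    rw [real_inner_self_eq_norm_mul_norm, Real.sqrt_mul_self (norm_nonneg _)]
  simp [fderivInnerCLM_apply, hs, real_inner_smul_left, real_inner_smul_right, real_inner_comm]
  field_simp
  ring

end Helpers


/-- The discrete Hamiltonian of the `N`-particle system:
`H(q,p) = (1/2) Σ_{i,j} ⟨p_i, p_j⟩ G(‖q_i − q_j‖)`. -/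
noncomputable def discreteHamiltonian (n N : ℕ) (G : ℝ → ℝ)
    (q p : Fin N → EuclideanSpace ℝ (Fin n)) : ℝ :=
  (1 / 2 : ℝ) * ∑ i : Fin N, ∑ j : Fin N,
    (inner ℝ (p i) (p j) : ℝ) * G ‖q i - q j‖

/-- The `N`-particle system is the canonical Hamiltonian system of the discrete
Hamiltonian `H`: at a configuration with distinct particles and an even kernel `G`
differentiable at the interparticle distances, `H` is differentiable, its gradient with
respect to `p_i` is `Σ_j G(‖q_i − q_j‖) p_j`, and its gradient with respect to `q_i` is
`Σ_{j≠i} ⟨p_i,p_j⟩ G′(‖q_i − q_j‖) (q_i − q_j)/‖q_i − q_j‖`; so `dq_i/dt = ∂H/∂p_i`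
and `dp_i/dt = −∂H/∂q_i` reproduce the `N`-particle system of the EP equations. -/
theorem discreteHamiltonian_canonical_gradients (n N : ℕ) (hn : 1 ≤ n) (hN : 1 ≤ N)
    (G : ℝ → ℝ) (hGeven : ∀ r : ℝ, G (-r) = G r)
    (q p : Fin N → EuclideanSpace ℝ (Fin n))
    (hsep : ∀ i j, i ≠ j → q i ≠ q j)
    (hGdiff : ∀ i j, i ≠ j → DifferentiableAt ℝ G ‖q i - q j‖) :
    DifferentiableAt ℝ
      (fun x : (Fin N → EuclideanSpace ℝ (Fin n)) × (Fin N → EuclideanSpace ℝ (Fin n)) =>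
        discreteHamiltonian n N G x.1 x.2) (q, p) ∧
    (∀ i : Fin N,
      HasGradientAt (fun pi => discreteHamiltonian n N G q (Function.update p i pi))
        (∑ j : Fin N, G ‖q i - q j‖ • p j) (p i)) ∧
    (∀ i : Fin N,
      HasGradientAt (fun qi => discreteHamiltonian n N G (Function.update q i qi) p)
        (∑ j ∈ Finset.univ.erase i,
          ((inner ℝ (p i) (p j) : ℝ) * deriv G ‖q i - q j‖ / ‖q i - q j‖) • (q i - q j))
        (q i)) := by
  classical
  refine ⟨?_, ?_, ?_⟩
  · -- differentiability
    simp only [discreteHamiltonian]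
    refine DifferentiableAt.const_mul ?_ _
    refine DifferentiableAt.fun_sum fun a _ => ?_
    refine DifferentiableAt.fun_sum fun b _ => ?_
    have hb2 : ∀ j : Fin N, DifferentiableAt ℝ
        (fun x : (Fin N → EuclideanSpace ℝ (Fin n)) × (Fin N → EuclideanSpace ℝ (Fin n)) => x.2 j) (q, p) := fun j =>
      ((ContinuousLinearMap.proj j).comp
        (ContinuousLinearMap.snd ℝ (Fin N → EuclideanSpace ℝ (Fin n)) (Fin N → EuclideanSpace ℝ (Fin n)))).differentiableAt
    refine DifferentiableAt.mul (DifferentiableAt.inner ℝ (hb2 a) (hb2 b)) ?_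
    by_cases hab : a = b
    · subst hab
      simp only [sub_self, norm_zero]
      exact differentiableAt_const _
    · have h1 : DifferentiableAt ℝ
          (fun x : (Fin N → EuclideanSpace ℝ (Fin n)) × (Fin N → EuclideanSpace ℝ (Fin n)) => x.1 a - x.1 b) (q, p) :=
        (((ContinuousLinearMap.proj a).comp
            (ContinuousLinearMap.fst ℝ (Fin N → EuclideanSpace ℝ (Fin n)) (Fin N → EuclideanSpace ℝ (Fin n)))) -
          ((ContinuousLinearMap.proj b).comp
            (ContinuousLinearMap.fst ℝ (Fin N → EuclideanSpace ℝ (Fin n)) (Fin N → EuclideanSpace ℝ (Fin n))))).differentiableAt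
      have hz : q a - q b ≠ 0 := sub_ne_zero.mpr (hsep a b hab)
      have h2 : DifferentiableAt ℝ (fun z : EuclideanSpace ℝ (Fin n) => ‖z‖) (q a - q b) :=
        (contDiffAt_norm (𝕜 := ℝ) (n := 1) hz).differentiableAt one_ne_zero
      have := ((hGdiff a b hab).comp (q, p) (h2.comp (q, p) h1))
      simpa [Function.comp_def] using this
  · -- gradient in p
    intro i
    simp only [discreteHamiltonian]
    have key : ∀ a b : Fin N, HasGradientAt
        (fun pi : EuclideanSpace ℝ (Fin n) => (inner ℝ (Function.update p i pi a) (Function.update p i pi b) : ℝ)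
          * G ‖q a - q b‖)
        ((if a = i then G ‖q a - q b‖ • p b else 0) +
          (if b = i then G ‖q a - q b‖ • p a else 0)) (p i) := by
      intro a b
      rcases eq_or_ne a i with ha | ha <;> rcases eq_or_ne b i with hb | hb
      · subst ha; subst hb
        simp only [Function.update_self, if_pos rfl]
        exact gradC _ _
      · subst ha
        simp only [Function.update_self, Function.update_of_ne hb, if_pos rfl, if_neg hb,
          add_zero]
        exact gradA _ _ _
      · subst hb
        simp only [Function.update_self, Function.update_of_ne ha, if_neg ha, if_pos rfl,
          zero_add]
        exact gradB _ _ _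
      · simp only [Function.update_of_ne ha, Function.update_of_ne hb, if_neg ha, if_neg hb,
          add_zero]
        exact gradConst _ _
    have H := gradHalf (gradSum Finset.univ fun a _ =>
      gradSum Finset.univ fun b _ => key a b)
    have hsum : ((1:ℝ)/2) • (∑ a : Fin N, ∑ b : Fin N,
        ((if a = i then G ‖q a - q b‖ • p b else 0) +
          (if b = i then G ‖q a - q b‖ • p a else 0)))
        = ∑ j : Fin N, G ‖q i - q j‖ • p j := by
      have h1 : ∀ a : Fin N, ‖q a - q i‖ = ‖q i - q a‖ := fun a => norm_sub_rev _ _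
      simp only [Finset.sum_add_distrib, Finset.sum_ite_irrel, Finset.sum_const_zero,
        Finset.sum_ite_eq, Finset.sum_ite_eq', Finset.mem_univ, if_true, h1]
      rw [← two_smul ℝ (∑ j : Fin N, G ‖q i - q j‖ • p j), smul_smul]
      norm_num
    rw [← hsum]
    exact H
  · -- gradient in q
    intro i
    simp only [discreteHamiltonian]
    have key : ∀ a b : Fin N, HasGradientAt
        (fun qi : EuclideanSpace ℝ (Fin n) => (inner ℝ (p a) (p b) : ℝ)
          * G ‖Function.update q i qi a - Function.update q i qi b‖)
        ((if a = i then
            ((inner ℝ (p i) (p b) : ℝ) * deriv G ‖q i - q b‖ / ‖q i - q b‖) • (q i - q b)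
          else 0) +
         (if b = i then
            ((inner ℝ (p i) (p a) : ℝ) * deriv G ‖q i - q a‖ / ‖q i - q a‖) • (q i - q a)
          else 0)) (q i) := by
      intro a b
      by_cases hab : a = b
      · subst hab
        simp only [sub_self, norm_zero]
        have hv : ((if a = i then
              ((inner ℝ (p i) (p a) : ℝ) * deriv G ‖q i - q a‖ / ‖q i - q a‖) • (q i - q a)
            else 0) +
           (if a = i then
              ((inner ℝ (p i) (p a) : ℝ) * deriv G ‖q i - q a‖ / ‖q i - q a‖) • (q i - q a)
            else 0)) = (0 : EuclideanSpace ℝ (Fin n)) := by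
          split_ifs with hai
          · subst hai; simp
          · simp
        rw [hv]
        exact gradConst _ _
      · rcases eq_or_ne a i with ha | ha
        · have hb : b ≠ i := fun h => hab (ha.trans h.symm)
          rw [ha]
          simp only [Function.update_self, Function.update_of_ne hb, if_pos rfl, if_neg hb,
            add_zero]
          exact gradNormComp (hsep i b (Ne.symm hb)) (hGdiff i b (Ne.symm hb)) _
        · rcases eq_or_ne b i with hb | hb
          · rw [hb]
            simp only [Function.update_self, Function.update_of_ne ha, if_neg ha, if_pos rfl,
              zero_add]
            have hfun : (fun qi : EuclideanSpace ℝ (Fin n) =>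
                  (inner ℝ (p a) (p i) : ℝ) * G ‖q a - qi‖)
                = fun qi : EuclideanSpace ℝ (Fin n) =>
                  (inner ℝ (p i) (p a) : ℝ) * G ‖qi - q a‖ := by
              funext qi
              rw [norm_sub_rev, real_inner_comm]
            rw [hfun]
            exact gradNormComp (hsep i a (Ne.symm ha)) (hGdiff i a (Ne.symm ha)) _
          · simp only [Function.update_of_ne ha, Function.update_of_ne hb, if_neg ha,
              if_neg hb, add_zero]
            exact gradConst _ _
    have H := gradHalf (gradSum Finset.univ fun a _ =>
      gradSum Finset.univ fun b _ => key a b)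
    have hsum : ((1:ℝ)/2) • (∑ a : Fin N, ∑ b : Fin N,
        ((if a = i then
            ((inner ℝ (p i) (p b) : ℝ) * deriv G ‖q i - q b‖ / ‖q i - q b‖) • (q i - q b)
          else 0) +
         (if b = i then
            ((inner ℝ (p i) (p a) : ℝ) * deriv G ‖q i - q a‖ / ‖q i - q a‖) • (q i - q a)
          else 0)))
        = ∑ j ∈ Finset.univ.erase i,
            ((inner ℝ (p i) (p j) : ℝ) * deriv G ‖q i - q j‖ / ‖q i - q j‖) • (q i - q j) := by
      have herase := Finset.sum_erase (M := EuclideanSpace ℝ (Fin n))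
        (f := fun j : Fin N =>
          ((inner ℝ (p i) (p j) : ℝ) * deriv G ‖q i - q j‖ / ‖q i - q j‖) • (q i - q j))
        (a := i) Finset.univ (by simp)
      rw [herase]
      simp only [Finset.sum_add_distrib, Finset.sum_ite_irrel, Finset.sum_const_zero,
        Finset.sum_ite_eq, Finset.sum_ite_eq', Finset.mem_univ, if_true]
      rw [← two_smul ℝ (∑ j : Fin N,
        ((inner ℝ (p i) (p j) : ℝ) * deriv G ‖q i - q j‖ / ‖q i - q j‖) • (q i - q j)), smul_smul]
      norm_num
    rw [← hsum]
    exact H
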